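/- Let p be a prime, A an integral domain of characteristic p which is a unique factorization domain, K its fraction field, x ∈ K a nonzero element, and m ≥ 1 an integer. If a, b ∈ 𝕎 K both satisfy fil(x, m) (that is, for every j < m, x·(a.coeff j)^(p^(m−1−j)) and x·(b.coeff j)^(p^(m−1−j)) lie in the image of A in K), then a + b and a − b also satisfy fil(x, m). In particular, the set of Witt vectors satisfying fil(x, m) is an additive subgroup of 𝕎 K. -/

import Mathlib

namespace WittFilAux

open WittVector MvPolynomial Finset

variable (p : ℕ) [hp : Fact p.Prime]

theorem ghost_scaled {R : Type*} [CommRing R] (u : R) (c : WittVector p R) (n : ℕ) :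
    ghostComponent n (WittVector.mk p (fun k => u ^ p ^ k * c.coeff k)) =
      u ^ p ^ n * ghostComponent n c := by
  rw [ghostComponent_apply, ghostComponent_apply, aeval_wittPolynomial, aeval_wittPolynomial,
    Finset.mul_sum]
  refine Finset.sum_congr rfl fun i hi => ?_
  rw [Finset.mem_range, Nat.lt_succ_iff] at hi
  rw [WittVector.coeff_mk]
  have h1 : (u ^ p ^ i) ^ p ^ (n - i) = u ^ p ^ n := by
    rw [← pow_mul, ← pow_add, Nat.add_sub_cancel' hi]
  rw [mul_pow, h1]
  ring

private theorem scaled_map {R S : Type*} [CommRing R] [CommRing S] (f : R →+* S) (u : R)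
    (c : WittVector p R) :
    WittVector.map f (WittVector.mk p (fun k => u ^ p ^ k * c.coeff k)) =
      WittVector.mk p (fun k => (f u) ^ p ^ k * (WittVector.map f c).coeff k) := by
  ext n
  simp [WittVector.map_coeff, WittVector.coeff_mk]

private theorem teich_mul_aux₁ {σ : Type*} (u : MvPolynomial σ ℚ)
    (c : WittVector p (MvPolynomial σ ℚ)) :
    teichmuller p u * c = WittVector.mk p (fun k => u ^ p ^ k * c.coeff k) := by
  apply (ghostMap.bijective_of_invertible p (MvPolynomial σ ℚ)).1
  ext n
  rw [ghostMap_apply, ghostMap_apply, ghost_scaled, map_mul, ghostComponent_teichmuller]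

private theorem teich_mul_aux₂ {σ : Type*} (u : MvPolynomial σ ℤ)
    (c : WittVector p (MvPolynomial σ ℤ)) :
    teichmuller p u * c = WittVector.mk p (fun k => u ^ p ^ k * c.coeff k) := by
  refine WittVector.map_injective (MvPolynomial.map (Int.castRingHom ℚ))
    (MvPolynomial.map_injective _ Int.cast_injective) ?_
  rw [RingHom.map_mul, map_teichmuller, scaled_map, teich_mul_aux₁]

theorem teichmuller_mul_coeff {R : Type*} [CommRing R] (u : R) (c : WittVector p R) (n : ℕ) :
    (teichmuller p u * c).coeff n = u ^ p ^ n * c.coeff n := by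
  have key : teichmuller p u * c = WittVector.mk p (fun k => u ^ p ^ k * c.coeff k) := by
    let U : MvPolynomial R ℤ := X u
    let C : WittVector p (MvPolynomial R ℤ) := WittVector.mk p fun k => X (c.coeff k)
    have hU : MvPolynomial.counit R U = u := counit_X u
    have hC : WittVector.map (MvPolynomial.counit R) C = c := by
      ext k
      simp [C, WittVector.map_coeff, WittVector.coeff_mk, counit_X]
    calc teichmuller p u * c
        = WittVector.map (MvPolynomial.counit R) (teichmuller p U * C) := by
          rw [RingHom.map_mul, map_teichmuller, hU, hC]
      _ = WittVector.mk p (fun k => u ^ p ^ k * c.coeff k) := by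
          rw [teich_mul_aux₂, scaled_map, hU, hC]
  rw [key, WittVector.coeff_mk]

end WittFilAux


namespace WittFilAux2

open WittVector

variable (p : ℕ) [hp : Fact p.Prime]

theorem coeffs_mem_add_sub {L : Type*} [CommRing L] (B : Subring L) (c d : WittVector p L)
    (hc : ∀ n, c.coeff n ∈ B) (hd : ∀ n, d.coeff n ∈ B) :
    (∀ n, (c + d).coeff n ∈ B) ∧ (∀ n, (c - d).coeff n ∈ B) := by
  let c' : WittVector p B := WittVector.mk p fun n => (⟨c.coeff n, hc n⟩ : B)
  let d' : WittVector p B := WittVector.mk p fun n => (⟨d.coeff n, hd n⟩ : B)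
  have hc' : WittVector.map B.subtype c' = c := by
    ext n; simp [c', WittVector.map_coeff, WittVector.coeff_mk]
  have hd' : WittVector.map B.subtype d' = d := by
    ext n; simp [d', WittVector.map_coeff, WittVector.coeff_mk]
  constructor <;> intro n
  · rw [← hc', ← hd', ← RingHom.map_add, WittVector.map_coeff]
    exact SetLike.coe_mem _
  · rw [← hc', ← hd', ← RingHom.map_sub, WittVector.map_coeff]
    exact SetLike.coe_mem _

theorem pow_iterate {R : Type*} [CommRing R] [CharP R p] [PerfectRing R p] (k : ℕ) (y : R) :
    (((frobeniusEquiv R p).symm)^[k] y) ^ p ^ k = y := by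
  induction k generalizing y with
  | zero => simp
  | succ k ih =>
    rw [Function.iterate_succ_apply, pow_succ, pow_mul, ih]
    exact frobeniusEquiv_symm_pow_p R p y

theorem trunc_coeff_eq {L : Type*} [CommRing L] (m : ℕ) (a a2 : WittVector p L)
    (h : WittVector.truncate m a2 = WittVector.truncate m a) (j : ℕ) (hj : j < m) :
    a2.coeff j = a.coeff j := by
  have h₂ := congrArg (fun z : TruncatedWittVector p m L => z.coeff ⟨j, hj⟩) h
  simpa only [WittVector.coeff_truncate] using h₂

end WittFilAux2


namespace WittFilAux3

open Polynomial

theorem key_mem {p : ℕ} [Fact p.Prime] {A K L : Type*} [CommRing A] [IsDomain A]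
    [UniqueFactorizationMonoid A] [Field K] [Algebra A K] [IsFractionRing A K]
    [CommRing L] [Algebra A L] (ι : K →ₐ[A] L) (hι : Function.Injective ι)
    (x : K) (u : L) (m j : ℕ) (hu : u ^ p ^ (m - 1) = ι x) (hj : j < m) (k : K) :
    x * k ^ p ^ (m - 1 - j) ∈ Set.range (algebraMap A K) ↔
      u ^ p ^ j * ι k ∈ integralClosure A L := by
  have hp' : p.Prime := Fact.out
  have hj' : j ≤ m - 1 := Nat.le_pred_of_lt hj
  have hsum : m - 1 - j + j = m - 1 := Nat.sub_add_cancel hj'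
  have hNe1 : p ^ (m - 1) ≠ 0 := pow_ne_zero _ hp'.ne_zero
  have hNe2 : p ^ j ≠ 0 := pow_ne_zero _ hp'.ne_zero
  have hpow : (u ^ p ^ j * ι k) ^ p ^ (m - 1) = ι ((x * k ^ p ^ (m - 1 - j)) ^ p ^ j) := by
    have h1 : (u ^ p ^ j) ^ p ^ (m - 1) = (ι x) ^ p ^ j := by
      rw [← pow_mul, mul_comm, pow_mul, hu]
    have h2 : (x * k ^ p ^ (m - 1 - j)) ^ p ^ j = x ^ p ^ j * k ^ p ^ (m - 1) := by
      rw [mul_pow, ← pow_mul, ← pow_add, hsum]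
    rw [mul_pow, h1, h2, map_mul, map_pow, map_pow]
  constructor
  · rintro ⟨w, hw⟩
    have hval : (u ^ p ^ j * ι k) ^ p ^ (m - 1) = algebraMap A L (w ^ p ^ j) := by
      rw [hpow, ← hw, ← map_pow, AlgHom.commutes]
    exact ⟨X ^ p ^ (m - 1) - C (w ^ p ^ j), monic_X_pow_sub_C _ hNe1, by
      rw [eval₂_sub, eval₂_X_pow, eval₂_C, hval, sub_self]⟩
  · intro hy
    have hyI : IsIntegral A (u ^ p ^ j * ι k) := hy
    have h3 : IsIntegral A (ι ((x * k ^ p ^ (m - 1 - j)) ^ p ^ j)) := by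
      rw [← hpow]; exact hyI.pow _
    have h4 : IsIntegral A ((x * k ^ p ^ (m - 1 - j)) ^ p ^ j) :=
      (isIntegral_algHom_iff ι hι).mp h3
    obtain ⟨w, hw⟩ := IsIntegrallyClosed.isIntegral_iff.mp h4
    have h5 : IsIntegral A (x * k ^ p ^ (m - 1 - j)) :=
      ⟨X ^ p ^ j - C w, monic_X_pow_sub_C _ hNe2, by
        rw [eval₂_sub, eval₂_X_pow, eval₂_C, ← hw, sub_self]⟩
    exact IsIntegrallyClosed.isIntegral_iff.mp h5

end WittFilAux3



/-- The Brylinski–Kato filtration condition on (truncated) Witt vectors, in Witt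
coordinates: `a ∈ 𝕎 K` satisfies `fil(x, m)` if for every `j < m` the element
`x * (a.coeff j) ^ (p ^ (m - 1 - j))` lies in the image of `A` in `K`. -/
def WittFil (p : ℕ) [Fact p.Prime] (A : Type*) {K : Type*} [CommRing A] [CommRing K]
    [Algebra A K] (x : K) (m : ℕ) (a : WittVector p K) : Prop :=
  ∀ j < m, x * a.coeff j ^ p ^ (m - 1 - j) ∈ Set.range (algebraMap A K)

/-- Let `A` be an integral domain of characteristic `p` which is a UFD,
`K` its fraction field, `x ∈ K` nonzero and `m ≥ 1`.  If `a, b ∈ 𝕎 K` both satisfy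
`fil(x, m)`, then so do `a + b` and `a - b`; in particular the Witt vectors satisfying
`fil(x, m)` form an additive subgroup of `𝕎 K`. -/
theorem wittFil_add_sub_mem
    (p : ℕ) [Fact p.Prime]
    (A : Type*) [CommRing A] [IsDomain A] [CharP A p] [UniqueFactorizationMonoid A]
    (K : Type*) [Field K] [Algebra A K] [IsFractionRing A K]
    (x : K) (hx : x ≠ 0) (m : ℕ) (hm : 1 ≤ m) :
    (∀ a b : WittVector p K, WittFil p A x m a → WittFil p A x m b →
      WittFil p A x m (a + b) ∧ WittFil p A x m (a - b)) ∧
    ∃ H : AddSubgroup (WittVector p K), ∀ c : WittVector p K,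
      c ∈ H ↔ WittFil p A x m c := by
  have hp' : p.Prime := Fact.out
  haveI : CharP K p := charP_of_injective_algebraMap (IsFractionRing.injective A K) p
  set L := PerfectClosure K p with hL
  let ι₀ : K →+* L := PerfectClosure.of K p
  letI : Algebra A L := (ι₀.comp (algebraMap A K)).toAlgebra
  let ι : K →ₐ[A] L := { toRingHom := ι₀, commutes' := fun a => rfl }
  have hι : Function.Injective ι := ι₀.injective
  let u : L := ((frobeniusEquiv L p).symm)^[m - 1] (ι₀ x)
  have hu : u ^ p ^ (m - 1) = ι x := WittFilAux2.pow_iterate p (m - 1) (ι₀ x)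
  have key : ∀ (k : K), ∀ j < m, (x * k ^ p ^ (m - 1 - j) ∈ Set.range (algebraMap A K) ↔
      u ^ p ^ j * ι₀ k ∈ integralClosure A L) := fun k j hj =>
    WittFilAux3.key_mem ι hι x u m j hu hj k
  have main : ∀ a b : WittVector p K, WittFil p A x m a → WittFil p A x m b →
      WittFil p A x m (a + b) ∧ WittFil p A x m (a - b) := by
    intro a b hfa hfb
    let tr : WittVector p K → WittVector p K := fun a =>
      WittVector.mk p (fun n => if n < m then a.coeff n else 0)
    have htr : ∀ a : WittVector p K,
        WittVector.truncate m (tr a) = WittVector.truncate m a := by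
      intro a
      ext i
      rw [WittVector.coeff_truncate, WittVector.coeff_truncate, WittVector.coeff_mk]
      exact if_pos i.2
    let cv := WittVector.teichmuller p u * WittVector.map ι₀ (tr a)
    let dv := WittVector.teichmuller p u * WittVector.map ι₀ (tr b)
    have hcoeff : ∀ c : WittVector p K, WittFil p A x m c → ∀ n,
        (WittVector.teichmuller p u * WittVector.map ι₀ (tr c)).coeff n ∈
          (integralClosure A L).toSubring := by
      intro c hfc n
      rw [Subalgebra.mem_toSubring, WittFilAux.teichmuller_mul_coeff, WittVector.map_coeff,
        WittVector.coeff_mk]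
      by_cases h : n < m
      · rw [if_pos h]
        exact (key (c.coeff n) n h).mp (hfc n h)
      · rw [if_neg h, map_zero, mul_zero]
        exact zero_mem _
    obtain ⟨hadd, hsub⟩ := WittFilAux2.coeffs_mem_add_sub p (integralClosure A L).toSubring
      cv dv (hcoeff a hfa) (hcoeff b hfb)
    constructor
    · intro j hj
      refine (key _ j hj).mpr ?_
      have h1 : (tr a + tr b).coeff j = (a + b).coeff j := by
        refine WittFilAux2.trunc_coeff_eq p m (a + b) (tr a + tr b) ?_ j hj
        rw [map_add, map_add, htr, htr]
      have h2 : (cv + dv).coeff j = u ^ p ^ j * ι₀ ((a + b).coeff j) := by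
        show (WittVector.teichmuller p u * WittVector.map ι₀ (tr a) +
          WittVector.teichmuller p u * WittVector.map ι₀ (tr b)).coeff j = _
        rw [← mul_add, ← RingHom.map_add, WittFilAux.teichmuller_mul_coeff,
          WittVector.map_coeff, h1]
      have h3 := hadd j
      rw [h2, Subalgebra.mem_toSubring] at h3
      exact h3
    · intro j hj
      refine (key _ j hj).mpr ?_
      have h1 : (tr a - tr b).coeff j = (a - b).coeff j := by
        refine WittFilAux2.trunc_coeff_eq p m (a - b) (tr a - tr b) ?_ j hj
        rw [map_sub, map_sub, htr, htr]
      have h2 : (cv - dv).coeff j = u ^ p ^ j * ι₀ ((a - b).coeff j) := by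
        show (WittVector.teichmuller p u * WittVector.map ι₀ (tr a) -
          WittVector.teichmuller p u * WittVector.map ι₀ (tr b)).coeff j = _
        rw [← mul_sub, ← RingHom.map_sub, WittFilAux.teichmuller_mul_coeff,
          WittVector.map_coeff, h1]
      have h3 := hsub j
      rw [h2, Subalgebra.mem_toSubring] at h3
      exact h3
  have hzero : WittFil p A x m 0 := by
    intro j hj
    rw [WittVector.zero_coeff, zero_pow (pow_ne_zero _ hp'.ne_zero), mul_zero]
    exact ⟨0, map_zero _⟩
  let H : AddSubgroup (WittVector p K) :=
    { carrier := setOf (fun c => WittFil p A x m c)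
      add_mem' := fun hc hd => (main _ _ hc hd).1
      zero_mem' := hzero
      neg_mem' := fun {c} hc => by
        have := (main 0 c hzero hc).2
        rw [zero_sub] at this
        exact this }
  exact ⟨main, H, fun c => Iff.rfl⟩
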